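/- Let G be a looped graph with n vertices, m edges and c loops with m + c = n. If G is a looped forest, then det M_{1,0,1}(G) = ± (∏_{edges e} a_e) · (∏_{loops l} c_l); otherwise det M_{1,0,1}(G) = 0. -/

import Mathlib

/-!
STATEMENT 8: determinant of the natural looped-forest matrix.
Let G be a looped graph with n vertices, m edges and c loops with m + c = n.  If G is a
looped forest, then det M_{1,0,1}(G) = ± (∏_{edges e} a_e) · (∏_{loops l} c_l);
otherwise det M_{1,0,1}(G) = 0.
-/

open MvPolynomial

/-- A looped graph. -/
structure LGraph (V E L : Type) where
  ends : E → V × V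
  ne : ∀ e, (ends e).1 ≠ (ends e).2
  loopAt : L → V

namespace LGraph

variable {V E L : Type}

/-- The simple graph on `V` underlying the edges of `G`. -/
def toSG (G : LGraph V E L) : SimpleGraph V :=
  SimpleGraph.fromRel fun u v => ∃ e, G.ends e = (u, v)

/-- `G` is a looped forest: its edges form a forest (no parallel edges and no cycles)
and each connected component contains exactly one loop. -/
def IsLoopedForest (G : LGraph V E L) : Prop :=
  (Function.Injective fun e => s((G.ends e).1, (G.ends e).2)) ∧
  G.toSG.IsAcyclic ∧
  ∀ comp : G.toSG.ConnectedComponent,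
    Nat.card {l : L // G.toSG.connectedComponentMk (G.loopAt l) = comp} = 1

/-- The matrix `M_{1,0,1}(G)` over `ℝ[a_e, c_l]` (variable `Sum.inl e` is `a_e`,
`Sum.inr l` is `c_l`): the row of edge `e = ij` has entry `a_e` in the column of `i`,
`−a_e` in the column of `j`, and zeros elsewhere; the row of the loop `l` on vertex `i`
has entry `c_l` in the column of `i` and zeros elsewhere. -/
noncomputable def M101 [DecidableEq V] (G : LGraph V E L) :
    Matrix (E ⊕ L) V (MvPolynomial (E ⊕ L) ℝ) := fun row v =>
  match row with
  | Sum.inl e =>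
      if v = (G.ends e).1 then X (Sum.inl e)
      else if v = (G.ends e).2 then -X (Sum.inl e) else 0
  | Sum.inr l => if v = G.loopAt l then X (Sum.inr l) else 0

end LGraph

open SimpleGraph

section AcyclicAux

variable {V : Type} [DecidableEq V] {G : SimpleGraph V}

lemma LF_dist_ne_of_adj (hG : G.IsAcyclic) {u v r : V} (h : G.Adj u v)
    (hur : G.Reachable u r) : G.dist u r ≠ G.dist v r := by
  intro heq
  have hvr : G.Reachable v r := h.symm.reachable.trans hur
  obtain ⟨pu, hpu, hlu⟩ := hur.exists_path_of_dist
  obtain ⟨pv, hpv, hlv⟩ := hvr.exists_path_of_dist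
  by_cases hv : v ∈ pu.support
  · have h1 := congrArg Walk.length (pu.take_spec hv)
    rw [Walk.length_append] at h1
    have h2 : G.dist v r ≤ (pu.dropUntil v hv).length := dist_le _
    have h3 : (pu.takeUntil v hv).length ≠ 0 := fun h0 => h.ne (Walk.eq_of_length_eq_zero h0)
    omega
  · have hw : (Walk.cons h.symm pu).IsPath := hpu.cons hv
    have hpq := isAcyclic_iff_path_unique.mp hG ⟨Walk.cons h.symm pu, hw⟩ ⟨pv, hpv⟩
    have := congrArg (fun q : G.Path v r => q.1.length) hpq
    simp only [Walk.length_cons] at this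
    omega

lemma LF_shallow_unique (hG : G.IsAcyclic) {u u' v r : V} (h : G.Adj u v) (h' : G.Adj u' v)
    (hur : G.Reachable u r) (hu'r : G.Reachable u' r)
    (h1 : G.dist u r < G.dist v r) (h2 : G.dist u' r < G.dist v r) : u = u' := by
  by_contra hne
  obtain ⟨pu, hpu, hlu⟩ := hur.exists_path_of_dist
  obtain ⟨pu', hpu', hlu'⟩ := hu'r.exists_path_of_dist
  by_cases hv : v ∈ pu.support
  · have hh1 := congrArg Walk.length (pu.take_spec hv)
    rw [Walk.length_append] at hh1
    have hh2 : G.dist v r ≤ (pu.dropUntil v hv).length := dist_le _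
    have hh3 : (pu.takeUntil v hv).length ≠ 0 := fun h0 => h.ne' (Walk.eq_of_length_eq_zero h0).symm
    omega
  by_cases hv' : v ∈ pu'.support
  · have hh1 := congrArg Walk.length (pu'.take_spec hv')
    rw [Walk.length_append] at hh1
    have hh2 : G.dist v r ≤ (pu'.dropUntil v hv').length := dist_le _
    have hh3 : (pu'.takeUntil v hv').length ≠ 0 := fun h0 => h'.ne' (Walk.eq_of_length_eq_zero h0).symm
    omega
  · have hw : (Walk.cons h.symm pu).IsPath := hpu.cons hv
    have hw' : (Walk.cons h'.symm pu').IsPath := hpu'.cons hv'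
    have hpq := isAcyclic_iff_path_unique.mp hG ⟨Walk.cons h.symm pu, hw⟩ ⟨Walk.cons h'.symm pu', hw'⟩
    have hsup := congrArg (fun q : G.Path v r => q.1.support) hpq
    simp only [Walk.support_cons] at hsup
    rw [Walk.support_eq_cons pu, Walk.support_eq_cons pu'] at hsup
    simp only [List.cons.injEq] at hsup
    exact hne hsup.2.1

end AcyclicAux

section Forest

variable {V E L : Type} [Fintype V] [Fintype E] [Fintype L]
    [DecidableEq V] [DecidableEq E] [DecidableEq L]

lemma LF_det_forest (G : LGraph V E L) (hmc : Fintype.card E + Fintype.card L = Fintype.card V)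
    (eqv : E ⊕ L ≃ V) (hF : G.IsLoopedForest) :
    ((LGraph.M101 G).submatrix id eqv).det =
        (∏ e : E, X (Sum.inl e)) * ∏ l : L, X (Sum.inr l) ∨
    ((LGraph.M101 G).submatrix id eqv).det =
        -((∏ e : E, X (Sum.inl e)) * ∏ l : L, X (Sum.inr l)) := by
  classical
  obtain ⟨hinj, hacyc, hone⟩ := hF
  set comp : V → G.toSG.ConnectedComponent := G.toSG.connectedComponentMk with hcomp
  -- unique loop in each component
  have hex : ∀ C : G.toSG.ConnectedComponent, ∃ l : L, comp (G.loopAt l) = C := by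
    intro C
    obtain ⟨⟨l, hl⟩⟩ := (Nat.card_eq_one_iff_unique.mp (hone C)).2
    exact ⟨l, hl⟩
  have huni : ∀ l l' : L, comp (G.loopAt l) = comp (G.loopAt l') → l = l' := by
    intro l l' hll
    have hs := (Nat.card_eq_one_iff_unique.mp (hone (comp (G.loopAt l')))).1
    exact congrArg Subtype.val (hs.elim ⟨l, hll⟩ ⟨l', rfl⟩)
  choose theLoop hTheLoop using hex
  set root : G.toSG.ConnectedComponent → V := fun C => G.loopAt (theLoop C) with hroot
  have hrootC : ∀ C, comp (root C) = C := fun C => hTheLoop C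
  have hrootloop : ∀ l, root (comp (G.loopAt l)) = G.loopAt l :=
    fun l => congrArg G.loopAt (huni _ l (hTheLoop _))
  set D : V → ℕ := fun v => G.toSG.dist v (root (comp v)) with hD
  have hreach : ∀ v, G.toSG.Reachable v (root (comp v)) := by
    intro v
    exact (ConnectedComponent.eq.mp (hrootC (comp v))).symm
  have hcompadj : ∀ {x y}, G.toSG.Adj x y → comp x = comp y := by
    intro x y h
    exact ConnectedComponent.sound h.reachable
  have hDadj : ∀ {x y}, G.toSG.Adj x y → D x ≠ D y := by
    intro x y h
    have hc : comp x = comp y := hcompadj h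
    have h2 := LF_dist_ne_of_adj hacyc h (hreach x)
    simp only [hD, hc] at h2 ⊢
    exact h2
  have hEadj : ∀ e : E, G.toSG.Adj (G.ends e).1 (G.ends e).2 := by
    intro e
    rw [LGraph.toSG, SimpleGraph.fromRel_adj]
    exact ⟨G.ne e, Or.inl ⟨e, rfl⟩⟩
  -- the deeper endpoint of each edge
  set deeper : E → V := fun e =>
    if D (G.ends e).1 < D (G.ends e).2 then (G.ends e).2 else (G.ends e).1 with hdeeper
  set other : E → V := fun e =>
    if D (G.ends e).1 < D (G.ends e).2 then (G.ends e).1 else (G.ends e).2 with hother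
  have hdo : ∀ e : E, (G.ends e = (other e, deeper e) ∨ G.ends e = (deeper e, other e)) ∧
      D (other e) < D (deeper e) := by
    intro e
    have hne := hDadj (hEadj e)
    by_cases hlt : D (G.ends e).1 < D (G.ends e).2
    · constructor
      · left; simp only [hdeeper, hother, if_pos hlt]
      · simp only [hdeeper, hother, if_pos hlt]; exact hlt
    · constructor
      · right; simp only [hdeeper, hother, if_neg hlt]
      · simp only [hdeeper, hother, if_neg hlt]; omega
  have hadj_od : ∀ e : E, G.toSG.Adj (other e) (deeper e) := by
    intro e
    rcases (hdo e).1 with h | h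
    · have := hEadj e; rw [h] at this; exact this
    · have := hEadj e; rw [h] at this; exact this.symm
  have hDloop : ∀ l : L, D (G.loopAt l) = 0 := by
    intro l
    simp only [hD, hrootloop l, SimpleGraph.dist_self]
  have hdeep_pos : ∀ e : E, 0 < D (deeper e) := fun e => lt_of_le_of_lt (Nat.zero_le _) (hdo e).2
  set π₀ : E ⊕ L → V := Sum.elim deeper G.loopAt with hπ₀
  have hπinj : Function.Injective π₀ := by
    rintro (e | l) (e' | l') hEq
    · simp only [hπ₀, Sum.elim_inl] at hEq
      congr 1
      have hco : comp (other e) = comp (deeper e) := hcompadj (hadj_od e)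
      have hco' : comp (other e') = comp (deeper e') := hcompadj (hadj_od e')
      have hce : comp (deeper e') = comp (deeper e) := by rw [hEq]
      have hoo : other e = other e' := by
        refine LF_shallow_unique (r := root (comp (deeper e))) hacyc (hadj_od e)
          (hEq ▸ hadj_od e') ?_ ?_ ?_ ?_
        · have := hreach (other e); rwa [hco] at this
        · have := hreach (other e'); rwa [hco', hce] at this
        · have := (hdo e).2; simp only [hD] at this; rwa [hco] at this
        · have := (hdo e').2; simp only [hD] at this
          rw [hco', hce] at this; rwa [← hEq] at this
      apply hinj
      have h1 : s((G.ends e).1, (G.ends e).2) = s(other e, deeper e) := by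
        rcases (hdo e).1 with h | h <;> rw [h] <;> simp [Sym2.eq_swap]
      have h2 : s((G.ends e').1, (G.ends e').2) = s(other e', deeper e') := by
        rcases (hdo e').1 with h | h <;> rw [h] <;> simp [Sym2.eq_swap]
      simp only [h1, h2, hoo, hEq]
    · exfalso
      simp only [hπ₀, Sum.elim_inl, Sum.elim_inr] at hEq
      have := hdeep_pos e
      rw [hEq, hDloop] at this
      omega
    · exfalso
      simp only [hπ₀, Sum.elim_inl, Sum.elim_inr] at hEq
      have := hdeep_pos e'
      rw [← hEq, hDloop] at this
      omega
    · simp only [hπ₀, Sum.elim_inr] at hEq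
      exact congrArg Sum.inr (huni l l' (congrArg comp hEq))
  have hcard : Fintype.card (E ⊕ L) = Fintype.card V := by
    rw [Fintype.card_sum]; exact hmc
  have hπbij : Function.Bijective π₀ := (Fintype.bijective_iff_injective_and_card π₀).mpr ⟨hπinj, hcard⟩
  set ρ : (E ⊕ L) ≃ V := Equiv.ofBijective π₀ hπbij with hρ
  set σ₀ : Equiv.Perm (E ⊕ L) := (ρ.trans eqv.symm).symm with hσ₀def
  have hσ₀ : ∀ i, π₀ (σ₀ i) = eqv i := by
    intro i
    have h1 : (ρ.trans eqv.symm) (σ₀ i) = i := Equiv.apply_symm_apply _ i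
    have h2 : eqv.symm (π₀ (σ₀ i)) = i := h1
    have := congrArg eqv h2
    rwa [Equiv.apply_symm_apply] at this
  -- entry lemmas
  have hM_inr : ∀ (l : L) (v : V), LGraph.M101 G (Sum.inr l) v =
      if v = G.loopAt l then X (Sum.inr l) else 0 := fun l v => rfl
  have hM_inl : ∀ (e : E) (v : V), LGraph.M101 G (Sum.inl e) v =
      if v = (G.ends e).1 then X (Sum.inl e)
      else if v = (G.ends e).2 then -X (Sum.inl e) else 0 := fun e v => rfl
  set N := (LGraph.M101 G).submatrix id eqv with hN
  have huniqσ : ∀ σ : Equiv.Perm (E ⊕ L), (∏ i, N (σ i) i) ≠ 0 → σ = σ₀ := by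
    intro σ hσ
    have hfac : ∀ r : E ⊕ L, (LGraph.M101 G) r (eqv (σ.symm r)) ≠ 0 := by
      intro r h0
      apply hσ
      refine Finset.prod_eq_zero (Finset.mem_univ (σ.symm r)) ?_
      simpa [hN, Matrix.submatrix_apply] using h0
    set π : (E ⊕ L) → V := fun r => eqv (σ.symm r) with hπ
    have hloopc : ∀ l : L, π (Sum.inr l) = G.loopAt l := by
      intro l
      by_contra hne
      apply hfac (Sum.inr l)
      rw [hM_inr, if_neg hne]
    have hedgec : ∀ e : E, π (Sum.inl e) = (G.ends e).1 ∨ π (Sum.inl e) = (G.ends e).2 := by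
      intro e
      by_contra hne
      push_neg at hne
      apply hfac (Sum.inl e)
      rw [hM_inl, if_neg hne.1, if_neg hne.2]
    have hmax : ∀ e : E, D (π (Sum.inl e)) ≤ D (deeper e) := by
      intro e
      have h2 := (hdo e).2
      rcases hedgec e with h | h <;> rw [h] <;> rcases (hdo e).1 with h' | h' <;>
          rw [h'] <;> simp <;> omega
    have hsum : ∑ r : E ⊕ L, D (π r) = ∑ r : E ⊕ L, D (π₀ r) := by
      have h1 : ∑ r : E ⊕ L, D (π r) = ∑ v : V, D v := Equiv.sum_comp (σ.symm.trans eqv) D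
      have h2 : ∑ r : E ⊕ L, D (π₀ r) = ∑ v : V, D v := Equiv.sum_comp ρ D
      rw [h1, h2]
    have hDeq : ∀ r : E ⊕ L, D (π r) = D (π₀ r) := by
      have hle : ∀ i ∈ Finset.univ, D (π i) ≤ D (π₀ i) := by
        rintro (e | l) _
        · exact hmax e
        · rw [hloopc l]; simp [hπ₀]
      exact fun r => (Finset.sum_eq_sum_iff_of_le hle).mp hsum r (Finset.mem_univ r)
    have hπeq : ∀ r, π r = π₀ r := by
      rintro (e | l)
      · have hd := hDeq (Sum.inl e)
        have h2 := (hdo e).2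
        show π (Sum.inl e) = deeper e
        rcases hedgec e with h | h <;> rcases (hdo e).1 with h' | h'
        · exfalso; rw [h, h'] at hd; simp only [hπ₀, Sum.elim_inl] at hd; omega
        · rw [h, h']
        · rw [h, h']
        · exfalso; rw [h, h'] at hd; simp only [hπ₀, Sum.elim_inl] at hd; omega
      · exact hloopc l
    have hsymm : σ.symm = σ₀.symm := by
      ext r
      have h1 : eqv (σ.symm r) = π₀ r := hπeq r
      have h2 : σ₀.symm r = eqv.symm (π₀ r) := rfl
      rw [h2, ← h1, Equiv.symm_apply_apply]
    rw [← Equiv.symm_symm σ, hsymm, Equiv.symm_symm]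
  have hdet : N.det = Equiv.Perm.sign σ₀ • ∏ i, N (σ₀ i) i := by
    rw [Matrix.det_apply]
    refine Finset.sum_eq_single σ₀ ?_ ?_
    · intro σ _ hσne
      by_cases hp : (∏ i, N (σ i) i) = 0
      · rw [hp, smul_zero]
      · exact absurd (huniqσ σ hp) hσne
    · intro h; exact absurd (Finset.mem_univ σ₀) h
  have hterm : (∏ i, N (σ₀ i) i) =
      ((∏ e : E, (if D (G.ends e).1 < D (G.ends e).2 then (-1 : MvPolynomial (E ⊕ L) ℝ) else 1)) *
        ∏ e : E, X (Sum.inl e)) * ∏ l : L, X (Sum.inr l) := by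
    have hg : ∀ i, N (σ₀ i) i = (fun r => LGraph.M101 G r (π₀ r)) (σ₀ i) := by
      intro i
      simp only [hN, Matrix.submatrix_apply, id, ← hσ₀ i]
    rw [Finset.prod_congr rfl (fun i _ => hg i),
      Equiv.prod_comp σ₀ (fun r => LGraph.M101 G r (π₀ r)), Fintype.prod_sum_type]
    have hLl : ∀ l : L, LGraph.M101 G (Sum.inr l) (π₀ (Sum.inr l)) = X (Sum.inr l) := by
      intro l; rw [hM_inr]; simp [hπ₀]
    have hEe : ∀ e : E, LGraph.M101 G (Sum.inl e) (π₀ (Sum.inl e)) =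
        (if D (G.ends e).1 < D (G.ends e).2 then (-1 : MvPolynomial (E ⊕ L) ℝ) else 1) *
          X (Sum.inl e) := by
      intro e
      rw [hM_inl]
      by_cases hlt : D (G.ends e).1 < D (G.ends e).2
      · have h1 : π₀ (Sum.inl e) = (G.ends e).2 := by
          simp only [hπ₀, Sum.elim_inl, hdeeper, if_pos hlt]
        rw [h1, if_neg (G.ne e).symm, if_pos rfl, if_pos hlt]
        ring
      · have h1 : π₀ (Sum.inl e) = (G.ends e).1 := by
          simp only [hπ₀, Sum.elim_inl, hdeeper, if_neg hlt]
        rw [h1, if_pos rfl, if_neg hlt]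
        ring
    rw [Finset.prod_congr rfl (fun e _ => hEe e), Finset.prod_congr rfl (fun l _ => hLl l),
      Finset.prod_mul_distrib]
  have hs1 : (∏ e : E, (if D (G.ends e).1 < D (G.ends e).2 then (-1 : MvPolynomial (E ⊕ L) ℝ) else 1)) = 1 ∨
      (∏ e : E, (if D (G.ends e).1 < D (G.ends e).2 then (-1 : MvPolynomial (E ⊕ L) ℝ) else 1)) = -1 := by
    refine Finset.prod_induction _ (fun x => x = 1 ∨ x = -1) ?_ (Or.inl rfl) ?_
    · rintro a b (rfl | rfl) (rfl | rfl) <;> simp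
    · intro e _; split <;> simp
  rw [hdet, hterm]
  rcases hs1 with hs2 | hs2 <;> rw [hs2] <;>
    rcases Int.units_eq_one_or (Equiv.Perm.sign σ₀) with hsg | hsg <;> rw [hsg]
  · left; simp
  · right; simp [Units.smul_def]
  · right; simp [Units.smul_def]
  · left; simp [Units.smul_def]


lemma LF_det_zero (G : LGraph V E L) (eqv : E ⊕ L ≃ V)
    (C : G.toSG.ConnectedComponent) (hC : ∀ l, G.toSG.connectedComponentMk (G.loopAt l) ≠ C) :
    ((LGraph.M101 G).submatrix id eqv).det = 0 := by
  classical
  set N := (LGraph.M101 G).submatrix id eqv with hN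
  set x : V → MvPolynomial (E ⊕ L) ℝ :=
    fun v => if G.toSG.connectedComponentMk v = C then 1 else 0 with hx
  have hEadj : ∀ e : E, G.toSG.Adj (G.ends e).1 (G.ends e).2 := by
    intro e
    rw [LGraph.toSG, SimpleGraph.fromRel_adj]
    exact ⟨G.ne e, Or.inl ⟨e, rfl⟩⟩
  have hmul : N.mulVec (x ∘ eqv) = 0 := by
    funext r
    have h1 : N.mulVec (x ∘ eqv) r = ∑ i : E ⊕ L, LGraph.M101 G r (eqv i) * x (eqv i) := by
      simp [Matrix.mulVec, dotProduct, hN, Matrix.submatrix_apply]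
    have h2 : ∑ i : E ⊕ L, LGraph.M101 G r (eqv i) * x (eqv i) =
        ∑ v : V, LGraph.M101 G r v * x v :=
      Equiv.sum_comp eqv (fun v => LGraph.M101 G r v * x v)
    have h0 : (0 : E ⊕ L → MvPolynomial (E ⊕ L) ℝ) r = 0 := rfl
    rw [h0, h1, h2]
    rcases r with e | l
    · have hcc : G.toSG.connectedComponentMk (G.ends e).1 =
          G.toSG.connectedComponentMk (G.ends e).2 :=
        SimpleGraph.ConnectedComponent.sound (hEadj e).reachable
      have hsplit : ∀ v : V, LGraph.M101 G (Sum.inl e) v * x v =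
          (if v = (G.ends e).1 then X (Sum.inl e) * x (G.ends e).1 else 0) +
          (if v = (G.ends e).2 then (-X (Sum.inl e)) * x (G.ends e).2 else 0) := by
        intro v
        rw [show LGraph.M101 G (Sum.inl e) v = (if v = (G.ends e).1 then X (Sum.inl e)
          else if v = (G.ends e).2 then -X (Sum.inl e) else 0) from rfl]
        by_cases h1 : v = (G.ends e).1
        · subst h1
          rw [if_pos rfl, if_pos rfl, if_neg (G.ne e), add_zero]
        · by_cases h2 : v = (G.ends e).2
          · subst h2
            rw [if_neg h1, if_pos rfl, if_neg h1, if_pos rfl, zero_add]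
          · rw [if_neg h1, if_neg h2, if_neg h1, if_neg h2, zero_mul, add_zero]
      rw [Finset.sum_congr rfl (fun v _ => hsplit v), Finset.sum_add_distrib,
        Finset.sum_ite_eq' Finset.univ, Finset.sum_ite_eq' Finset.univ]
      simp only [Finset.mem_univ, if_true]
      have hxx : x (G.ends e).1 = x (G.ends e).2 := by simp only [hx, hcc]
      rw [hxx]; ring
    · have hsplit : ∀ v : V, LGraph.M101 G (Sum.inr l) v * x v =
          (if v = G.loopAt l then X (Sum.inr l) * x (G.loopAt l) else 0) := by
        intro v
        rw [show LGraph.M101 G (Sum.inr l) v =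
          (if v = G.loopAt l then X (Sum.inr l) else 0) from rfl]
        by_cases h1 : v = G.loopAt l
        · subst h1; rw [if_pos rfl, if_pos rfl]
        · rw [if_neg h1, if_neg h1, zero_mul]
      rw [Finset.sum_congr rfl (fun v _ => hsplit v), Finset.sum_ite_eq' Finset.univ]
      simp only [Finset.mem_univ, if_true]
      have hxx : x (G.loopAt l) = 0 := by simp only [hx, if_neg (hC l)]
      rw [hxx, mul_zero]
  obtain ⟨v₀, hv₀⟩ := C.exists_rep
  have h3 := congrArg (fun y => (N.adjugate).mulVec y) hmul
  simp only [Matrix.mulVec_mulVec, Matrix.mulVec_zero] at h3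
  rw [Matrix.adjugate_mul, Matrix.smul_mulVec, Matrix.one_mulVec] at h3
  have h4 := congrArg (fun y => y (eqv.symm v₀)) h3
  simp only [Pi.smul_apply, Pi.zero_apply, smul_eq_mul, Function.comp] at h4
  rw [Equiv.apply_symm_apply] at h4
  have hv₀' : G.toSG.connectedComponentMk v₀ = C := hv₀
  have hx1 : x v₀ = 1 := by simp only [hx, if_pos hv₀']
  rw [hx1, mul_one] at h4
  exact h4

lemma LF_forest_of_all_comps (G : LGraph V E L)
    (hmc : Fintype.card E + Fintype.card L = Fintype.card V)
    (h : ∀ C : G.toSG.ConnectedComponent, ∃ l, G.toSG.connectedComponentMk (G.loopAt l) = C) :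
    G.IsLoopedForest := by
  classical
  set comp : V → G.toSG.ConnectedComponent := G.toSG.connectedComponentMk with hcomp
  have hrep0 : ∀ C : G.toSG.ConnectedComponent, ∃ v, comp v = C := fun C => C.exists_rep
  choose rep hrep using hrep0
  set D : V → ℕ := fun v => G.toSG.dist v (rep (comp v)) with hD
  have hreach : ∀ v, G.toSG.Reachable v (rep (comp v)) := fun v =>
    (SimpleGraph.ConnectedComponent.eq.mp (hrep (comp v))).symm
  have hcompadj : ∀ {x y}, G.toSG.Adj x y → comp x = comp y := fun hxy =>
    SimpleGraph.ConnectedComponent.sound hxy.reachable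
  have hEadj : ∀ e : E, G.toSG.Adj (G.ends e).1 (G.ends e).2 := by
    intro e; rw [LGraph.toSG, SimpleGraph.fromRel_adj]; exact ⟨G.ne e, Or.inl ⟨e, rfl⟩⟩
  have hstep : ∀ v : V, v ≠ rep (comp v) → ∃ (e : E) (w : V),
      (G.ends e = (v, w) ∨ G.ends e = (w, v)) ∧ D w < D v := by
    intro v hv
    obtain ⟨p, hp, hl⟩ := (hreach v).exists_path_of_dist
    obtain ⟨w, hadj, q, rfl⟩ := Walk.exists_eq_cons_of_ne hv p
    have hadj' := hadj
    rw [LGraph.toSG, SimpleGraph.fromRel_adj] at hadj'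
    obtain ⟨hne, hor⟩ := hadj'
    have hcw : comp w = comp v := (hcompadj hadj).symm
    have hdw : D w < D v := by
      have h1 : G.toSG.dist w (rep (comp v)) ≤ q.length := dist_le q
      have h2 : (Walk.cons hadj q).length = q.length + 1 := Walk.length_cons _ _
      simp only [hD, hcw]
      omega
    rcases hor with ⟨e, he⟩ | ⟨e, he⟩
    · exact ⟨e, w, Or.inl he, hdw⟩
    · exact ⟨e, w, Or.inr he, hdw⟩
  choose edgeOf wOf hEnds hDlt using hstep
  set g : V → E ⊕ G.toSG.ConnectedComponent := fun v =>
    if hv : v = rep (comp v) then Sum.inr (comp v) else Sum.inl (edgeOf v hv) with hg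
  have hginj : Function.Injective g := by
    intro a b hab
    simp only [hg] at hab
    by_cases ha : a = rep (comp a) <;> by_cases hb : b = rep (comp b)
    · rw [dif_pos ha, dif_pos hb] at hab
      have hcc : comp a = comp b := Sum.inr.inj hab
      rw [ha, hb, hcc]
    · rw [dif_pos ha, dif_neg hb] at hab
      exact absurd hab (by simp)
    · rw [dif_neg ha, dif_pos hb] at hab
      exact absurd hab (by simp)
    · rw [dif_neg ha, dif_neg hb] at hab
      have he : edgeOf a ha = edgeOf b hb := Sum.inl.inj hab
      have h1 := hEnds a ha
      have h2 := hEnds b hb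
      rw [he] at h1
      have d1 := hDlt a ha
      have d2 := hDlt b hb
      rcases h1 with h1 | h1 <;> rcases h2 with h2 | h2 <;> rw [h1, Prod.mk.injEq] at h2 <;>
        obtain ⟨h3, h4⟩ := h2
      · exact h3
      · rw [h4] at d1; rw [← h3] at d2; omega
      · rw [h3] at d1; rw [← h4] at d2; omega
      · exact h4
  have hkc : Fintype.card V ≤ Fintype.card E + Fintype.card G.toSG.ConnectedComponent := by
    have := Fintype.card_le_of_injective g hginj
    rwa [Fintype.card_sum] at this
  have hck : Fintype.card G.toSG.ConnectedComponent ≤ Fintype.card L :=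
    Fintype.card_le_of_surjective (fun l => comp (G.loopAt l)) (fun C => h C)
  have hcards : Fintype.card V = Fintype.card (E ⊕ G.toSG.ConnectedComponent) := by
    rw [Fintype.card_sum]; omega
  have hgbij : Function.Bijective g :=
    (Fintype.bijective_iff_injective_and_card g).mpr ⟨hginj, hcards⟩
  have hkey : ∀ e : E, ∃ (x : V) (hx : x ≠ rep (comp x)), edgeOf x hx = e := by
    intro e
    obtain ⟨x, hxe⟩ := hgbij.2 (Sum.inl e)
    simp only [hg] at hxe
    by_cases hx : x = rep (comp x)
    · rw [dif_pos hx] at hxe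
      exact absurd hxe (by simp)
    · rw [dif_neg hx] at hxe
      exact ⟨x, hx, Sum.inl.inj hxe⟩
  -- injectivity of the edge-endpoints map
  have hendsinj : Function.Injective (fun e : E => s((G.ends e).1, (G.ends e).2)) := by
    intro e e' hee
    simp only at hee
    obtain ⟨x, hx, hxe⟩ := hkey e
    obtain ⟨x', hx', hxe'⟩ := hkey e'
    have h1 := hEnds x hx
    rw [hxe] at h1
    have h2 := hEnds x' hx'
    rw [hxe'] at h2
    have d1 := hDlt x hx
    have d2 := hDlt x' hx'
    have hA : s((G.ends e).1, (G.ends e).2) = s(x, wOf x hx) := by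
      rcases h1 with h1 | h1 <;> rw [h1] <;> first | rfl | exact Sym2.eq_swap
    have hB : s((G.ends e').1, (G.ends e').2) = s(x', wOf x' hx') := by
      rcases h2 with h2 | h2 <;> rw [h2] <;> first | rfl | exact Sym2.eq_swap
    have hpair : s(x, wOf x hx) = s(x', wOf x' hx') := by rw [← hA, ← hB, hee]
    rw [Sym2.eq_iff] at hpair
    rcases hpair with ⟨hxx, -⟩ | ⟨hxw, hwx⟩
    · subst hxx
      rw [← hxe, ← hxe']
    · rw [← hxw] at d2
      rw [hwx] at d1
      omega
  have hDadjne : ∀ {a b : V}, G.toSG.Adj a b → D a ≠ D b := by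
    intro a b hab hDab
    have hab' := hab
    rw [LGraph.toSG, SimpleGraph.fromRel_adj] at hab'
    obtain ⟨hne, hor⟩ := hab'
    obtain ⟨e, he⟩ : ∃ e, G.ends e = (a, b) ∨ G.ends e = (b, a) := by
      rcases hor with ⟨e, he⟩ | ⟨e, he⟩
      · exact ⟨e, Or.inl he⟩
      · exact ⟨e, Or.inr he⟩
    obtain ⟨x, hx, hxe⟩ := hkey e
    have h1 := hEnds x hx
    rw [hxe] at h1
    have d1 := hDlt x hx
    rcases h1 with h1 | h1 <;> rcases he with he | he <;> rw [h1, Prod.mk.injEq] at he <;>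
        obtain ⟨h3, h4⟩ := he <;> rw [← h3, ← h4] at hDab <;> omega
  have hdown : ∀ a b : V, G.toSG.Adj a b → D b < D a →
      ∃ (e : E) (ha' : a ≠ rep (comp a)), edgeOf a ha' = e ∧
        (G.ends e = (a, b) ∨ G.ends e = (b, a)) := by
    intro a b hab hba
    have hab' := hab
    rw [LGraph.toSG, SimpleGraph.fromRel_adj] at hab'
    obtain ⟨hne, hor⟩ := hab'
    obtain ⟨e, he⟩ : ∃ e, G.ends e = (a, b) ∨ G.ends e = (b, a) := by
      rcases hor with ⟨e, he⟩ | ⟨e, he⟩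
      · exact ⟨e, Or.inl he⟩
      · exact ⟨e, Or.inr he⟩
    obtain ⟨x, hx, hxe⟩ := hkey e
    have h1 := hEnds x hx
    rw [hxe] at h1
    have d1 := hDlt x hx
    have hxa : x = a := by
      rcases h1 with h1 | h1 <;> rcases he with he' | he' <;> rw [h1, Prod.mk.injEq] at he' <;>
        obtain ⟨h3, h4⟩ := he'
      · exact h3
      · exfalso; rw [h4] at d1; rw [h3] at d1; omega
      · exfalso; rw [h3] at d1; rw [h4] at d1; omega
      · exact h4
    subst hxa
    exact ⟨e, hx, hxe, hEnds x hx |>.imp (fun hh => hh) (fun hh => hh) |>.elim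
      (fun _ => by rw [hxe] at *; exact he) (fun _ => by rw [hxe] at *; exact he)⟩
  have hacyc : G.toSG.IsAcyclic := by
    intro v p hp
    have hvmem : v ∈ p.support.toFinset := List.mem_toFinset.mpr p.start_mem_support
    obtain ⟨u, hu_mem, hu_max⟩ := p.support.toFinset.exists_max_image D ⟨v, hvmem⟩
    have humem : u ∈ p.support := List.mem_toFinset.mp hu_mem
    have hq : (p.rotate u humem).IsCycle := hp.rotate humem
    have hqsup : ∀ w, w ∈ (p.rotate u humem).support → w ∈ p.support := by
      intro w hw
      have h1 := p.support_rotate u humem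
      rw [Walk.support_eq_cons (p.rotate u humem)] at hw
      rcases List.mem_cons.mp hw with rfl | hw
      · exact humem
      · exact List.mem_of_mem_tail (h1.mem_iff.mp hw)
    have hq3 := hq.three_le_length
    have hnn : ¬(p.rotate u humem).Nil := Walk.not_nil_iff_lt_length.mpr (by omega)
    obtain ⟨w₁, ha₁, q₁, hq₁⟩ := Walk.not_nil_iff.mp hnn
    rw [hq₁] at hq hq3
    have hq₁3 : 2 ≤ q₁.length := by
      rw [Walk.length_cons] at hq3; omega
    have hnn₁ : ¬q₁.reverse.Nil := by
      rw [Walk.not_nil_iff_lt_length, Walk.length_reverse]; omega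
    obtain ⟨w₂, ha₂, q₂, hq₂⟩ := Walk.not_nil_iff.mp hnn₁
    have hw₁p : w₁ ∈ p.support := by
      apply hqsup; rw [hq₁, Walk.support_cons]
      exact List.mem_cons_of_mem _ q₁.start_mem_support
    have hw₂q₁ : w₂ ∈ q₁.support := by
      have hh : w₂ ∈ q₁.reverse.support := by
        rw [hq₂, Walk.support_cons]
        exact List.mem_cons_of_mem _ q₂.start_mem_support
      rwa [Walk.support_reverse, List.mem_reverse] at hh
    have hw₂p : w₂ ∈ p.support := by
      apply hqsup; rw [hq₁, Walk.support_cons]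
      exact List.mem_cons_of_mem _ hw₂q₁
    have hd₁ : D w₁ < D u :=
      lt_of_le_of_ne (hu_max w₁ (List.mem_toFinset.mpr hw₁p))
        (fun hh => hDadjne ha₁ hh.symm)
    have hd₂ : D w₂ < D u :=
      lt_of_le_of_ne (hu_max w₂ (List.mem_toFinset.mpr hw₂p))
        (fun hh => hDadjne ha₂ hh.symm)
    have hAB : s(u, w₁) ≠ s(u, w₂) := by
      intro hEq
      have hnodup := hq.edges_nodup
      rw [Walk.edges_cons] at hnodup
      have hhead : s(u, w₁) ∉ q₁.edges := (List.nodup_cons.mp hnodup).1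
      have hBmem : s(u, w₂) ∈ q₁.edges := by
        rw [← List.mem_reverse, ← Walk.edges_reverse, hq₂, Walk.edges_cons]
        exact List.mem_cons_self
      rw [hEq] at hhead
      exact hhead hBmem
    obtain ⟨e₁, hu₁, he₁, hor₁⟩ := hdown u w₁ ha₁ hd₁
    obtain ⟨e₂, hu₂, he₂, hor₂⟩ := hdown u w₂ ha₂ hd₂
    have he12 : e₁ = e₂ := by rw [← he₁, ← he₂]
    apply hAB
    have hA : s(u, w₁) = s((G.ends e₁).1, (G.ends e₁).2) := by
      rcases hor₁ with hh | hh <;> rw [hh] <;> first | rfl | exact Sym2.eq_swap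
    have hB : s((G.ends e₂).1, (G.ends e₂).2) = s(u, w₂) := by
      rcases hor₂ with hh | hh <;> rw [hh] <;> first | rfl | exact Sym2.eq_swap
    rw [hA, he12, hB]
  refine ⟨hendsinj, hacyc, ?_⟩
  have hLCeq : Fintype.card L = Fintype.card G.toSG.ConnectedComponent := by
    have hh := hcards
    rw [Fintype.card_sum] at hh
    omega
  intro C
  have hfib : ∀ C' : G.toSG.ConnectedComponent,
      1 ≤ Fintype.card {l : L // comp (G.loopAt l) = C'} := by
    intro C'
    obtain ⟨l, hl⟩ := h C'
    exact Fintype.card_pos_iff.mpr ⟨⟨l, hl⟩⟩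
  have hsig : ∑ C' : G.toSG.ConnectedComponent,
      Fintype.card {l : L // comp (G.loopAt l) = C'} = Fintype.card L := by
    rw [← Fintype.card_sigma]
    exact Fintype.card_congr (Equiv.sigmaFiberEquiv (fun l => comp (G.loopAt l)))
  have hsumeq : (∑ _C' : G.toSG.ConnectedComponent, 1) =
      ∑ C' : G.toSG.ConnectedComponent, Fintype.card {l : L // comp (G.loopAt l) = C'} := by
    rw [hsig, Finset.sum_const, smul_eq_mul, mul_one, Finset.card_univ, hLCeq]
  have hall := (Finset.sum_eq_sum_iff_of_le (fun i _ => hfib i)).mp hsumeq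
  rw [Nat.card_eq_fintype_card]
  exact (hall C (Finset.mem_univ C)).symm

end Forest


/-- **Determinant of the natural looped-forest matrix.**  The square matrix is formed
using an arbitrary bijection `eqv` between the rows (edges and loops) and the columns
(vertices); such a bijection exists since `m + c = n`. -/
theorem det_M101
    {V E L : Type} [Fintype V] [Fintype E] [Fintype L]
    [DecidableEq V] [DecidableEq E] [DecidableEq L]
    (G : LGraph V E L) (hmc : Fintype.card E + Fintype.card L = Fintype.card V)
    (eqv : E ⊕ L ≃ V) :
    (G.IsLoopedForest →
      ((LGraph.M101 G).submatrix id eqv).det =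
          (∏ e : E, X (Sum.inl e)) * ∏ l : L, X (Sum.inr l) ∨
      ((LGraph.M101 G).submatrix id eqv).det =
          -((∏ e : E, X (Sum.inl e)) * ∏ l : L, X (Sum.inr l))) ∧
    (¬ G.IsLoopedForest → ((LGraph.M101 G).submatrix id eqv).det = 0) := by
  constructor
  · intro hF
    exact LF_det_forest G hmc eqv hF
  · intro hNF
    have hC : ∃ C : G.toSG.ConnectedComponent,
        ∀ l, G.toSG.connectedComponentMk (G.loopAt l) ≠ C := by
      by_contra hcon
      push_neg at hcon
      exact hNF (LF_forest_of_all_comps G hmc (fun C => hcon C))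
    obtain ⟨C, hC⟩ := hC
    exact LF_det_zero G eqv C hC
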